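/- Let n ≥ 2 and let A be a substitution algebra with transpositions of dimension n that is completely representable, i.e. there exist a set W, a dipermutable V ⊆ ^nW, and an injective representation f : A → 𝒫(V) with ⋃_{x ∈ At A} f(x) = V. Then for every finite composite σ of the operations s_{ij}, s^i_j of A (including the empty composite), the set {σ(x) : x ∈ At A} has least upper bound 1 in A. -/

import Mathlib

/-- The replacement `[i/j]`, sending `i` to `j` and fixing everything else. -/
def replacement {ι : Type*} [DecidableEq ι] (i j : ι) : ι → ι := fun k => if k = i then j else k

/-- A substitution algebra with transpositions of dimension `ι` (an algebra satisfying the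
equation set `Σ'_n`). -/
structure SubstTranspAlgebra (ι : Type*) (A : Type*) [BooleanAlgebra A] where
  t : ι → ι → A → A
  r : ι → ι → A → A
  t_inf : ∀ i j : ι, i ≠ j → ∀ x y : A, t i j (x ⊓ y) = t i j x ⊓ t i j y
  t_compl : ∀ i j : ι, i ≠ j → ∀ x : A, t i j xᶜ = (t i j x)ᶜ
  r_inf : ∀ i j : ι, i ≠ j → ∀ x y : A, r i j (x ⊓ y) = r i j x ⊓ r i j y
  r_compl : ∀ i j : ι, i ≠ j → ∀ x : A, r i j xᶜ = (r i j x)ᶜ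
  t_symm : ∀ i j : ι, i ≠ j → t i j = t j i
  t_invol : ∀ i j : ι, i ≠ j → ∀ x : A, t i j (t i j x) = x
  t_comm : ∀ i j k l : ι, i ≠ j → k ≠ l → i ≠ k → i ≠ l → j ≠ k → j ≠ l →
    ∀ x : A, t i j (t k l x) = t k l (t i j x)
  t_braid : ∀ i j k : ι, i ≠ j → j ≠ k → i ≠ k →
    ∀ x : A, t i j (t j k (t i j x)) = t i k x
  tr_disjoint : ∀ i j k l : ι, i ≠ j → k ≠ l → i ≠ k → i ≠ l → j ≠ k → j ≠ l →
    ∀ x : A, t k l (r j i (t k l x)) = r j i x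
  tr_jk : ∀ i j k : ι, i ≠ j → j ≠ k → i ≠ k →
    ∀ x : A, t j k (r j i (t j k x)) = r k i x
  tr_ki : ∀ i j k : ι, i ≠ j → j ≠ k → i ≠ k →
    ∀ x : A, t k i (r j i (t k i x)) = r j k x
  tr_ij : ∀ i j : ι, i ≠ j → ∀ x : A, t i j (r j i (t i j x)) = r i j x
  rr_disjoint : ∀ i j k l : ι, i ≠ j → k ≠ l → i ≠ k → i ≠ l → j ≠ k → j ≠ l →
    ∀ x : A, r j i (r k l x) = r k l (r j i x)
  rr_comm : ∀ i j k : ι, i ≠ j → j ≠ k → i ≠ k →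
    ∀ x : A, r j i (r k i x) = r k i (r j i x)
  rr_comm' : ∀ i j k : ι, i ≠ j → j ≠ k → i ≠ k →
    ∀ x : A, r k i (r j i x) = r j i (r k j x)
  rr_twist : ∀ i j k : ι, i ≠ j → j ≠ k → i ≠ k →
    ∀ x : A, r j i (r i k x) = r j k (t i j x)
  rr_absorb : ∀ i j k : ι, i ≠ j → j ≠ k → i ≠ k →
    ∀ x : A, r j i (r j k x) = r j k x
  rr_idem : ∀ i j : ι, i ≠ j → ∀ x : A, r j i (r j i x) = r j i x
  rr_inv : ∀ i j : ι, i ≠ j → ∀ x : A, r j i (r i j x) = r j i x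
  rt_absorb : ∀ i j : ι, i ≠ j → ∀ x : A, r j i (t i j x) = t i j x

/-- The finite composite of substitution operations encoded by a list: `Sum.inl (i,j)`
applies `s_{ij}` and `Sum.inr (i,j)` applies `s^i_j`; the empty list is the identity. -/
def applyOps {ι : Type*} {A : Type*} [BooleanAlgebra A] (M : SubstTranspAlgebra ι A) :
    List ((ι × ι) ⊕ (ι × ι)) → A → A
  | [], x => x
  | (Sum.inl (i, j)) :: L, x => M.t i j (applyOps M L x)
  | (Sum.inr (i, j)) :: L, x => M.r i j (applyOps M L x)

/-- A list encodes a genuine composite when every operation in it has distinct indices. -/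
def GoodOps {ι : Type*} (L : List ((ι × ι) ⊕ (ι × ι))) : Prop :=
  ∀ p ∈ L, Sum.elim (fun q : ι × ι => q.1 ≠ q.2) (fun q : ι × ι => q.1 ≠ q.2) p

/-- conversely, if a substitution algebra with transpositions of dimension
`n ≥ 2` is completely representable, then for every finite composite `σ` of its operations
the set `{σ(x) : x ∈ At A}` has least upper bound `1`. -/
theorem substTranspAlgebra_complete_representation_sup (n : ℕ) (hn : 2 ≤ n)
    {A : Type*} [BooleanAlgebra A] (M : SubstTranspAlgebra (Fin n) A)
    (W : Type*) (V : Set (Fin n → W))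
    (hV : ∀ i j : Fin n, i ≠ j → ∀ q ∈ V,
      q ∘ (Equiv.swap i j) ∈ V ∧ q ∘ (replacement i j) ∈ V)
    (f : A → Set (Fin n → W))
    (hsub : ∀ x : A, f x ⊆ V)
    (hinj : Function.Injective f)
    (hinf : ∀ x y : A, f (x ⊓ y) = f x ∩ f y)
    (hcompl : ∀ x : A, f xᶜ = V \ f x)
    (htop : f ⊤ = V)
    (ht : ∀ i j : Fin n, i ≠ j → ∀ x : A,
      f (M.t i j x) = {q ∈ V | q ∘ (Equiv.swap i j) ∈ f x})
    (hr : ∀ i j : Fin n, i ≠ j → ∀ x : A,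
      f (M.r i j x) = {q ∈ V | q ∘ (replacement i j) ∈ f x})
    (hatomscover : (⋃ x ∈ {b : A | IsAtom b}, f x) = V) :
    ∀ L : List ((Fin n × Fin n) ⊕ (Fin n × Fin n)), GoodOps L →
      IsLUB (applyOps M L '' {b : A | IsAtom b}) ⊤ := by

  have hmono : ∀ x y : A, x ≤ y → f x ⊆ f y := by
    intro x y hxy
    have h := hinf x y
    rw [inf_eq_left.mpr hxy] at h
    rw [h]; exact Set.inter_subset_right
  have key : ∀ L : List ((Fin n × Fin n) ⊕ (Fin n × Fin n)), GoodOps L → ∀ q ∈ V,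
      ∃ q' ∈ V, ∀ x : A, q ∈ f (applyOps M L x) ↔ q' ∈ f x := by
    intro L
    induction L with
    | nil => exact fun _ q hq => ⟨q, hq, fun x => Iff.rfl⟩
    | cons p L ih =>
      intro hgood q hq
      have hL' : GoodOps L := fun p hp => hgood p (List.mem_cons_of_mem _ hp)
      match p with
      | Sum.inl (i, j) =>
        have hij : i ≠ j := hgood _ List.mem_cons_self
        obtain ⟨q', hq'V, hiff⟩ := ih hL' (q ∘ Equiv.swap i j) (hV i j hij q hq).1
        refine ⟨q', hq'V, fun x => ?_⟩
        show q ∈ f (M.t i j (applyOps M L x)) ↔ _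
        rw [ht i j hij]
        simp only [Set.mem_setOf_eq, hq, true_and]
        exact hiff x
      | Sum.inr (i, j) =>
        have hij : i ≠ j := hgood _ List.mem_cons_self
        obtain ⟨q', hq'V, hiff⟩ := ih hL' (q ∘ replacement i j) (hV i j hij q hq).2
        refine ⟨q', hq'V, fun x => ?_⟩
        show q ∈ f (M.r i j (applyOps M L x)) ↔ _
        rw [hr i j hij]
        simp only [Set.mem_setOf_eq, hq, true_and]
        exact hiff x
  intro L hL
  constructor
  · intro y _; exact le_top
  · intro u hu
    have hfu : f u = V := by
      refine Set.Subset.antisymm (hsub u) ?_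
      intro q hq
      obtain ⟨q', hq'V, hiff⟩ := key L hL q hq
      rw [← hatomscover] at hq'V
      obtain ⟨b, hb, hq'b⟩ := Set.mem_iUnion₂.mp hq'V
      have hqb : q ∈ f (applyOps M L b) := (hiff b).mpr hq'b
      exact hmono _ _ (hu ⟨b, hb, rfl⟩) hqb
    exact (hinj (hfu.trans htop.symm)).ge
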